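/- Let $k=\mathbb{F}_{2^m}$, $b\in k$, $a\in k^*$, and let $W\subseteq k$ be the set of roots in $k$ of $E_{ab}(x)=a^4x^{16}+b^4x^8+b^2x^2+ax$, an $\mathbb{F}_2$-subspace of dimension $w\le 4$. Then the image $E_{ab}(k)$ equals the orthogonal complement of $W^4=\{z^4:z\in W\}$ with respect to the bilinear pairing $(x,y)\mapsto\mathrm{Tr}_{k/\mathbb{F}_2}(xy)$; in particular $|E_{ab}(k)|=q/2^w$. -/

import Mathlib

/-- The image of the additive polynomial map `E_ab(x) = a⁴x¹⁶ + b⁴x⁸ + b²x² + ax`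
on `k = 𝔽_q` is the orthogonal complement, for the trace pairing `Tr(xy)`, of
`W⁴ = {z⁴ : z ∈ W}` where `W = ker E_ab`; in particular `|E_ab(k)|·|W| = q`
(i.e. `|E_ab(k)| = q/2^w` with `w = dim W`). -/
theorem stmt_19 (k : Type*) [Field k] [Fintype k] [CharP k 2]
    [Algebra (ZMod 2) k]
    (m : ℕ) (hm : 0 < m) (hq : Fintype.card k = 2 ^ m)
    (a b : k) (ha : a ≠ 0) :
    Set.range (fun x : k => a ^ 4 * x ^ 16 + b ^ 4 * x ^ 8 + b ^ 2 * x ^ 2 + a * x)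
        = {y : k | ∀ z : k,
            a ^ 4 * z ^ 16 + b ^ 4 * z ^ 8 + b ^ 2 * z ^ 2 + a * z = 0 →
            Algebra.trace (ZMod 2) k (z ^ 4 * y) = 0} ∧
    Nat.card (Set.range
          (fun x : k => a ^ 4 * x ^ 16 + b ^ 4 * x ^ 8 + b ^ 2 * x ^ 2 + a * x))
        * Nat.card {z : k |
            a ^ 4 * z ^ 16 + b ^ 4 * z ^ 8 + b ^ 2 * z ^ 2 + a * z = 0}
      = 2 ^ m := by
  classical
  set g : k → k := fun x => a ^ 4 * x ^ 16 + b ^ 4 * x ^ 8 + b ^ 2 * x ^ 2 + a * x with hgdef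
  have h2 : (2 : k) = 0 := by exact_mod_cast CharP.cast_eq_zero k 2
  -- char-2 binomial facts
  have h2k : ∀ s t : k, (s + t) ^ 2 = s ^ 2 + t ^ 2 := CharTwo.add_sq
  have h4k : ∀ s t : k, (s + t) ^ 4 = s ^ 4 + t ^ 4 := by
    intro s t
    rw [show (4 : ℕ) = 2 * 2 from rfl, pow_mul, h2k, h2k]
    ring
  have h8k : ∀ s t : k, (s + t) ^ 8 = s ^ 8 + t ^ 8 := by
    intro s t
    rw [show (8 : ℕ) = 4 * 2 from rfl, pow_mul, h4k, h2k]
    ring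
  have h16k : ∀ s t : k, (s + t) ^ 16 = s ^ 16 + t ^ 16 := by
    intro s t
    rw [show (16 : ℕ) = 8 * 2 from rfl, pow_mul, h8k, h2k]
    ring
  -- additivity of `g`
  have hadd : ∀ x y : k, g (x + y) = g x + g y := by
    intro x y
    simp only [hgdef, h16k, h8k, h2k]
    ring
  let φg : k →+ k := AddMonoidHom.mk' g hadd
  let f : k →ₗ[ZMod 2] k := φg.toZModLinearMap 2
  have hf : ∀ x, f x = g x := fun _ => rfl
  -- the map `z ↦ z ^ 4` as a linear map
  have hadd4 : ∀ x y : k, (x + y) ^ 4 = x ^ 4 + y ^ 4 := h4k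
  let φ4 : k →ₗ[ZMod 2] k := (AddMonoidHom.mk' (fun x : k => x ^ 4) hadd4).toZModLinearMap 2
  have hφ4 : ∀ x, φ4 x = x ^ 4 := fun _ => rfl
  have hinj4 : Function.Injective φ4 := by
    intro x y hxy
    have hx : (frobenius k 2) ((frobenius k 2) x) = (frobenius k 2) ((frobenius k 2) y) := by
      simp only [frobenius_def, ← pow_mul]
      exact hxy
    exact frobenius_inj k 2 (frobenius_inj k 2 hx)
  -- trace is invariant under squaring
  have hsq : ∀ c : ZMod 2, c ^ 2 = c := by decide
  let σ : k ≃ₐ[ZMod 2] k := AlgEquiv.ofRingEquiv (f := frobeniusEquiv k 2)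
    (fun c => by rw [frobeniusEquiv_def, ← map_pow, hsq])
  have trace_sq : ∀ v : k, Algebra.trace (ZMod 2) k (v ^ 2) = Algebra.trace (ZMod 2) k v := by
    intro v
    have := Algebra.trace_eq_of_algEquiv σ v
    exact this
  have trace_four : ∀ v : k, Algebra.trace (ZMod 2) k (v ^ 4) = Algebra.trace (ZMod 2) k v := by
    intro v
    rw [show v ^ 4 = (v ^ 2) ^ 2 by ring, trace_sq, trace_sq]
  -- the key vanishing identity
  have key : ∀ z x : k, g z = 0 → Algebra.trace (ZMod 2) k (z ^ 4 * g x) = 0 := by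
    intro z x hz
    have hz' : a ^ 4 * z ^ 16 + b ^ 4 * z ^ 8 + b ^ 2 * z ^ 2 + a * z = 0 := hz
    set u : k := a * z ^ 4 + b * z ^ 2 with hu
    have hAB : a ^ 4 * z ^ 16 + b ^ 4 * z ^ 8 = b ^ 2 * z ^ 2 + a * z := by
      linear_combination hz' - (b ^ 2 * z ^ 2 + a * z) * h2
    have hu4 : a * z * x ^ 4 + b ^ 2 * z ^ 2 * x ^ 4 = (u * x) ^ 4 := by
      rw [mul_pow, hu, h4k (a * z ^ 4) (b * z ^ 2)]
      linear_combination -x ^ 4 * hAB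
    have e : z ^ 4 * g x
        = ((a * z * x ^ 4) ^ 4 + (b ^ 2 * z ^ 2 * x ^ 4) ^ 2)
          + ((b * z ^ 2 * x) ^ 2 + a * z ^ 4 * x) := by
      simp only [hgdef]; ring
    rw [e, map_add, map_add, map_add, trace_four, trace_sq, trace_sq,
      ← map_add, hu4, trace_four, ← map_add,
      show b * z ^ 2 * x + a * z ^ 4 * x = u * x by rw [hu]; ring]
    exact CharTwo.add_self_eq_zero _
  -- submodules
  set W : Submodule (ZMod 2) k := LinearMap.ker f with hW
  set Rg : Submodule (ZMod 2) k := LinearMap.range f with hR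
  set W4 : Submodule (ZMod 2) k := W.map φ4 with hW4
  set B : LinearMap.BilinForm (ZMod 2) k := Algebra.traceForm (ZMod 2) k with hB
  have hBnd : B.Nondegenerate := traceForm_nondegenerate (ZMod 2) k
  have hBrefl : B.IsRefl := (Algebra.traceForm_isSymm (ZMod 2)).isRefl
  set P : Submodule (ZMod 2) k := B.orthogonal W4 with hP
  have hmemP : ∀ y : k, y ∈ P ↔ ∀ z : k, g z = 0 →
      Algebra.trace (ZMod 2) k (z ^ 4 * y) = 0 := by
    intro y
    constructor
    · intro hy z hz
      have : φ4 z ∈ W4 := Submodule.mem_map_of_mem (by simpa [hW, LinearMap.mem_ker, hf] using hz)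
      have := hy _ this
      simpa [LinearMap.BilinForm.IsOrtho, hB, Algebra.traceForm_apply, hφ4] using this
    · intro hy n hn
      obtain ⟨z, hz, rfl⟩ := hn
      have hz' : g z = 0 := by simpa [hW, LinearMap.mem_ker, hf] using hz
      simpa [LinearMap.BilinForm.IsOrtho, hB, Algebra.traceForm_apply, hφ4] using hy z hz'
  -- range ≤ orthogonal complement
  have hle : Rg ≤ P := by
    rintro y ⟨x, rfl⟩
    rw [hmemP]
    intro z hz
    simpa [hf] using key z x hz
  -- dimension count
  have hfr : Module.finrank (ZMod 2) Rg + Module.finrank (ZMod 2) W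
      = Module.finrank (ZMod 2) k := LinearMap.finrank_range_add_finrank_ker f
  have hfrW4 : Module.finrank (ZMod 2) W4 = Module.finrank (ZMod 2) W :=
    (LinearEquiv.finrank_eq (Submodule.equivMapOfInjective φ4 hinj4 W)).symm
  have hfrP : Module.finrank (ZMod 2) P
      = Module.finrank (ZMod 2) k - Module.finrank (ZMod 2) W4 :=
    LinearMap.BilinForm.finrank_orthogonal hBnd W4
  have hWle : Module.finrank (ZMod 2) W ≤ Module.finrank (ZMod 2) k :=
    Submodule.finrank_le W
  have hREq : Rg = P := by
    apply Submodule.eq_of_le_of_finrank_eq hle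
    rw [hfrP, hfrW4]
    omega
  -- set identifications
  have hset1 : Set.range (fun x : k => a ^ 4 * x ^ 16 + b ^ 4 * x ^ 8 + b ^ 2 * x ^ 2 + a * x)
      = (Rg : Set k) := by
    ext y
    simp only [Set.mem_range, hR, SetLike.mem_coe, LinearMap.mem_range]
    exact ⟨fun ⟨x, hx⟩ => ⟨x, hx⟩, fun ⟨x, hx⟩ => ⟨x, hx⟩⟩
  have hset2 : {z : k | a ^ 4 * z ^ 16 + b ^ 4 * z ^ 8 + b ^ 2 * z ^ 2 + a * z = 0}
      = (W : Set k) := by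
    ext z
    simp only [Set.mem_setOf_eq, hW, SetLike.mem_coe, LinearMap.mem_ker, hf]
    exact Iff.rfl
  constructor
  · rw [hset1, hREq]
    ext y
    rw [SetLike.mem_coe, hmemP]
    exact Iff.rfl
  · rw [hset1, hset2]
    have c1 : Nat.card (Rg : Set k) = 2 ^ Module.finrank (ZMod 2) Rg := by
      have := Module.card_eq_pow_finrank (K := ZMod 2) (V := Rg)
      rw [← Nat.card_eq_fintype_card] at this
      simpa [ZMod.card] using this
    have c2 : Nat.card (W : Set k) = 2 ^ Module.finrank (ZMod 2) W := by
      have := Module.card_eq_pow_finrank (K := ZMod 2) (V := W)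
      rw [← Nat.card_eq_fintype_card] at this
      simpa [ZMod.card] using this
    have ck : Fintype.card k = 2 ^ Module.finrank (ZMod 2) k := by
      have := Module.card_eq_pow_finrank (K := ZMod 2) (V := k)
      simpa [ZMod.card] using this
    rw [c1, c2, ← pow_add, hfr, ← ck, hq]
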